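/- Let F be a field of odd characteristic and let x, y, x', y' ∈ F² with d(x,y) = d(x',y') ≠ 0. Then there exists exactly one orientation-preserving rigid motion g (composition of a rotation in SO₂(F) and a translation) such that g(x) = x' and g(y) = y'. -/
import Mathlib

private lemma rot_aux (F : Type*) [Field F] (a b a' b' : F)
    (hd : a ^ 2 + b ^ 2 = a' ^ 2 + b' ^ 2) (hs : a ^ 2 + b ^ 2 ≠ 0) :
    ∃! p : F × F, p.1 ^ 2 + p.2 ^ 2 = 1 ∧ p.1 * a - p.2 * b = a' ∧
      p.2 * a + p.1 * b = b' := by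
  refine ⟨((a * a' + b * b') / (a ^ 2 + b ^ 2), (a * b' - b * a') / (a ^ 2 + b ^ 2)),
    ⟨?_, ?_, ?_⟩, ?_⟩
  · field_simp
    linear_combination (-(a ^ 2) - b ^ 2) * hd
  · field_simp
    ring
  · field_simp
    ring
  · rintro ⟨u2, v2⟩ ⟨h1, h2, h3⟩
    rw [Prod.mk.injEq]
    constructor
    · rw [eq_div_iff hs]; linear_combination a * h2 + b * h3
    · rw [eq_div_iff hs]; linear_combination a * h3 - b * h2

private lemma mulVec_rot (F : Type*) [Field F] (u v : F) (z : Fin 2 → F) :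
    (!![u, -v; v, u]).mulVec z = ![u * z 0 - v * z 1, v * z 0 + u * z 1] := by
  funext i
  fin_cases i <;>
    simp [Matrix.mulVec, dotProduct, Fin.sum_univ_two] <;> ring

theorem unique_rigid_motion (F : Type*) [Field F] (hchar : (2 : F) ≠ 0)
    (x y x' y' : Fin 2 → F)
    (hd : (x 0 - y 0) ^ 2 + (x 1 - y 1) ^ 2 = (x' 0 - y' 0) ^ 2 + (x' 1 - y' 1) ^ 2)
    (hne : (x 0 - y 0) ^ 2 + (x 1 - y 1) ^ 2 ≠ 0) :
    ∃! g : Matrix (Fin 2) (Fin 2) F × (Fin 2 → F),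
      (∃ u v : F, u ^ 2 + v ^ 2 = 1 ∧ g.1 = !![u, -v; v, u]) ∧
      g.1.mulVec x + g.2 = x' ∧ g.1.mulVec y + g.2 = y' := by
  obtain ⟨⟨u, v⟩, ⟨huv, hua, hub⟩, huniq⟩ := rot_aux F _ _ _ _ hd hne
  simp only at huv hua hub
  refine ⟨(!![u, -v; v, u], x' - (!![u, -v; v, u]).mulVec x), ⟨⟨u, v, huv, rfl⟩, ?_, ?_⟩, ?_⟩
  · funext i
    simp only [Pi.add_apply, Pi.sub_apply]
    ring
  · rw [mulVec_rot, mulVec_rot]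
    funext i
    fin_cases i
    · simp [Matrix.vecHead, Matrix.vecTail, Function.comp]
      linear_combination -hua
    · simp [Matrix.vecHead, Matrix.vecTail, Function.comp]
      linear_combination -hub
  · rintro ⟨R, t⟩ ⟨⟨u2, v2, huv2, hR⟩, h1, h2⟩
    subst hR
    simp only [mulVec_rot] at h1 h2
    have e0 := congrFun h1 0
    have e1 := congrFun h1 1
    have f0 := congrFun h2 0
    have f1 := congrFun h2 1
    simp only [Pi.add_apply, Matrix.cons_val_zero, Matrix.cons_val_one, Matrix.head_cons]
      at e0 e1 f0 f1
    have key : (u2, v2) = (u, v) := huniq (u2, v2)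
      ⟨huv2, by linear_combination e0 - f0, by linear_combination e1 - f1⟩
    obtain ⟨hu2, hv2⟩ := Prod.mk.injEq .. ▸ key
    subst hu2; subst hv2
    refine Prod.ext rfl ?_
    rw [mulVec_rot]
    funext i
    fin_cases i
    · simp [Matrix.vecHead, Matrix.vecTail, Function.comp]
      linear_combination e0
    · simp [Matrix.vecHead, Matrix.vecTail, Function.comp]
      linear_combination e1
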